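/- Consider boosting for T rounds in the setup below, where at each round t the margin vector m^t ∈ {−1, +1}^n is arbitrary, ε_t = Σ_{i : m^t_i = −1} q^t_i satisfies 0 < ε_t < 1, and α_t = (1/2)·ln((1 − ε_t)/ε_t). Suppose for each round t there is a distribution w^t ∈ Δ_n such that, with γ_t^(w) = (1/2)·Σ_{i=1}^n w^t_i m^t_i and δ_t = √( KL(w^t ‖ q^t) / 2 ), one has γ_t^(w) > δ_t. Then the final exponential loss satisfies L_exp(f_T) ≤ n · exp( −2 · Σ_{t=1}^T (γ_t^(w) − δ_t)^2 ). -/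

import Mathlib

/-- Cumulative score of example `i` after `t` rounds: `s_{t,i} = Σ_{s=1}^t α_s · m^s_i`. -/
noncomputable def cumScore (n : ℕ) (m : ℕ → Fin n → ℝ) (α : ℕ → ℝ) (t : ℕ) (i : Fin n) : ℝ :=
  ∑ s ∈ Finset.Icc 1 t, α s * m s i

/-- Exponential loss after `t` rounds: `L_exp(f_t) = Σ_i exp(−s_{t,i})`. -/
noncomputable def expLoss (n : ℕ) (m : ℕ → Fin n → ℝ) (α : ℕ → ℝ) (t : ℕ) : ℝ :=
  ∑ i, Real.exp (-(cumScore n m α t i))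

/-- Exponential-weights distribution at round `t`:
`q^t_i = exp(−s_{t−1,i}) / L_exp(f_{t−1})`. -/
noncomputable def expWeights (n : ℕ) (m : ℕ → Fin n → ℝ) (α : ℕ → ℝ) (t : ℕ) (i : Fin n) : ℝ :=
  Real.exp (-(cumScore n m α (t - 1) i)) / expLoss n m α (t - 1)

/-- Kullback–Leibler divergence on the finite simplex
(with the convention `0 · ln 0 = 0`, which holds automatically since `0 * x = 0`). -/
noncomputable def klDiv (n : ℕ) (p q : Fin n → ℝ) : ℝ :=
  ∑ i, p i * Real.log (p i / q i)

open Real in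
-- logit minus 4x is monotone on (0,1)
lemma aux_H_mono : MonotoneOn (fun x : ℝ => Real.log x - Real.log (1 - x) - 4 * x)
    (Set.Ioo 0 1) := by
  have hderiv : ∀ x ∈ Set.Ioo (0:ℝ) 1,
      HasDerivAt (fun x : ℝ => Real.log x - Real.log (1 - x) - 4 * x)
        (x⁻¹ + (1 - x)⁻¹ - 4) x := by
    intro x hx
    have h1 : HasDerivAt Real.log x⁻¹ x := Real.hasDerivAt_log (ne_of_gt hx.1)
    have h2 : HasDerivAt (fun x : ℝ => Real.log (1 - x)) (-(1 - x)⁻¹) x := by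
      have hl : HasDerivAt Real.log (1 - x)⁻¹ (1 - x) :=
        Real.hasDerivAt_log (by linarith [hx.2])
      have hc : HasDerivAt (fun x : ℝ => 1 - x) (-1) x := by
        simpa using (hasDerivAt_id x).const_sub 1
      exact (hl.comp x hc).congr_deriv (by ring)
    have h3 : HasDerivAt (fun x : ℝ => 4 * x) 4 x := by
      simpa using (hasDerivAt_id x).const_mul 4
    have := (h1.sub h2).sub h3
    exact this.congr_deriv (by ring)
  have hio : interior (Set.Ioo (0:ℝ) 1) = Set.Ioo 0 1 := interior_Ioo
  apply monotoneOn_of_deriv_nonneg (convex_Ioo 0 1)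
  · intro x hx
    exact (hderiv x hx).differentiableAt.continuousAt.continuousWithinAt
  · rw [hio]
    intro x hx
    exact (hderiv x hx).differentiableAt.differentiableWithinAt
  · rw [hio]
    intro x hx
    rw [(hderiv x hx).deriv]
    have hx0 : 0 < x := hx.1
    have hx1 : 0 < 1 - x := by linarith [hx.2]
    have key : x⁻¹ + (1 - x)⁻¹ - 4 = (2 * x - 1) ^ 2 / (x * (1 - x)) := by
      field_simp
      ring
    rw [key]
    positivity

lemma aux_binPinsker (a b : ℝ) (ha0 : 0 ≤ a) (ha1 : a ≤ 1) (hb0 : 0 < b) (hb1 : b < 1) :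
    2 * (a - b) ^ 2 ≤ a * Real.log (a / b) + (1 - a) * Real.log ((1 - a) / (1 - b)) := by
  set H : ℝ → ℝ := fun x => Real.log x - Real.log (1 - x) - 4 * x with hH
  set F : ℝ → ℝ := fun x => x * Real.log x + (1 - x) * Real.log (1 - x)
      - (x * Real.log b + (1 - x) * Real.log (1 - b)) - 2 * (x - b) ^ 2 with hF
  have hFcont : Continuous F := by
    have h1 : Continuous fun x : ℝ => x * Real.log x := Real.continuous_mul_log
    have h2 : Continuous fun x : ℝ => (1 - x) * Real.log (1 - x) :=
      h1.comp (continuous_const.sub continuous_id)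
    fun_prop
  have hFderiv : ∀ x ∈ Set.Ioo (0:ℝ) 1, HasDerivAt F (H x - H b) x := by
    intro x hx
    have hx0 : x ≠ 0 := ne_of_gt hx.1
    have hx1 : (1 : ℝ) - x ≠ 0 := by have := hx.2; intro h; linarith [h]
    have h1 : HasDerivAt (fun x : ℝ => x * Real.log x) (Real.log x + 1) x :=
      Real.hasDerivAt_mul_log hx0
    have h2 : HasDerivAt (fun x : ℝ => (1 - x) * Real.log (1 - x))
        (-(Real.log (1 - x) + 1)) x := by
      have hl : HasDerivAt (fun y : ℝ => y * Real.log y) (Real.log (1 - x) + 1) (1 - x) :=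
        Real.hasDerivAt_mul_log hx1
      have hc : HasDerivAt (fun x : ℝ => 1 - x) (-1) x := by
        simpa using (hasDerivAt_id x).const_sub 1
      exact (hl.comp x hc).congr_deriv (by ring)
    have h3 : HasDerivAt (fun x : ℝ => x * Real.log b + (1 - x) * Real.log (1 - b))
        (Real.log b - Real.log (1 - b)) x := by
      have := ((hasDerivAt_id x).mul_const (Real.log b)).add
        (((hasDerivAt_id x).const_sub 1).mul_const (Real.log (1 - b)))
      exact this.congr_deriv (by ring)
    have h4 : HasDerivAt (fun x : ℝ => 2 * (x - b) ^ 2) (4 * (x - b)) x := by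
      have := (((hasDerivAt_id x).sub_const b).pow 2).const_mul 2
      exact this.congr_deriv (by simp only [id_eq]; ring)
    have := ((h1.add h2).sub h3).sub h4
    exact this.congr_deriv (by simp only [hH]; ring)
  have hbmem : b ∈ Set.Ioo (0:ℝ) 1 := ⟨hb0, hb1⟩
  have hFb : F b = 0 := by simp [hF]
  -- F a ≥ 0
  have hFa : 0 ≤ F a := by
    rcases le_or_gt b a with hba | hab
    · -- monotone on [b,1]
      have hmono : MonotoneOn F (Set.Icc b 1) := by
        apply monotoneOn_of_deriv_nonneg (convex_Icc b 1) hFcont.continuousOn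
        · rw [interior_Icc]
          intro x hx
          exact (hFderiv x ⟨lt_trans hb0 hx.1, hx.2⟩).differentiableAt.differentiableWithinAt
        · rw [interior_Icc]
          intro x hx
          have hx' : x ∈ Set.Ioo (0:ℝ) 1 := ⟨lt_trans hb0 hx.1, hx.2⟩
          rw [(hFderiv x hx').deriv]
          have := aux_H_mono hbmem hx' (le_of_lt hx.1)
          linarith
      have := hmono ⟨le_refl b, le_of_lt hb1⟩ ⟨hba, ha1⟩ hba
      linarith [hFb]
    · have hanti : AntitoneOn F (Set.Icc 0 b) := by
        apply antitoneOn_of_deriv_nonpos (convex_Icc 0 b) hFcont.continuousOn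
        · rw [interior_Icc]
          intro x hx
          exact (hFderiv x ⟨hx.1, lt_trans hx.2 hb1⟩).differentiableAt.differentiableWithinAt
        · rw [interior_Icc]
          intro x hx
          have hx' : x ∈ Set.Ioo (0:ℝ) 1 := ⟨hx.1, lt_trans hx.2 hb1⟩
          rw [(hFderiv x hx').deriv]
          have := aux_H_mono hx' hbmem (le_of_lt hx.2)
          linarith
      have := hanti ⟨ha0, le_of_lt hab⟩ ⟨hb0.le, le_refl b⟩ (le_of_lt hab)
      linarith [hFb]
  -- rewrite log of quotients
  have e1 : a * Real.log (a / b) = a * Real.log a - a * Real.log b := by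
    rcases eq_or_lt_of_le ha0 with h | h
    · simp [← h]
    · rw [Real.log_div (ne_of_gt h) (ne_of_gt hb0)]; ring
  have e2 : (1 - a) * Real.log ((1 - a) / (1 - b))
      = (1 - a) * Real.log (1 - a) - (1 - a) * Real.log (1 - b) := by
    rcases eq_or_lt_of_le ha1 with h | h
    · simp [h]
    · rw [Real.log_div (by linarith) (by linarith)]; ring
  simp only [hF] at hFa
  linarith [hFa]

lemma aux_logSum {ι : Type*} (S : Finset ι) (w q : ι → ℝ)
    (hw : ∀ i ∈ S, 0 ≤ w i) (hq : ∀ i ∈ S, 0 < q i) (hb : 0 < ∑ i ∈ S, q i) :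
    (∑ i ∈ S, w i) * Real.log ((∑ i ∈ S, w i) / (∑ i ∈ S, q i))
      ≤ ∑ i ∈ S, w i * Real.log (w i / q i) := by
  set a := ∑ i ∈ S, w i with ha
  set b := ∑ i ∈ S, q i with hbdef
  have ha0 : 0 ≤ a := Finset.sum_nonneg hw
  -- Jensen with weights q i / b at points w i / q i for φ(x) = x log x
  have hjensen := Real.convexOn_mul_log.map_sum_le (t := S) (w := fun i => q i / b)
    (p := fun i => w i / q i)
    (fun i hi => div_nonneg (hq i hi).le hb.le)
    (by rw [← Finset.sum_div]; field_simp; exact hbdef.symm)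
    (fun i hi => div_nonneg (hw i hi) (hq i hi).le)
  have hpt : ∀ i ∈ S, (q i / b) • (w i / q i) = w i / b := by
    intro i hi
    have h := (hq i hi).ne'
    simp only [smul_eq_mul]
    field_simp
  have hterm : ∀ i ∈ S, (q i / b) • ((w i / q i) * Real.log (w i / q i))
      = (w i * Real.log (w i / q i)) / b := by
    intro i hi
    have h := (hq i hi).ne'
    rcases eq_or_lt_of_le (hw i hi) with h0 | h0
    · simp [← h0]
    · have h0' := h0.ne'
      simp only [smul_eq_mul]
      field_simp
  simp only [smul_eq_mul] at hjensen
  simp only [smul_eq_mul] at hpt hterm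
  rw [Finset.sum_congr rfl hpt, Finset.sum_congr rfl hterm, ← Finset.sum_div,
    ← Finset.sum_div, ← ha] at hjensen
  calc a * Real.log (a / b) = (a / b * Real.log (a / b)) * b := by field_simp
    _ ≤ ((∑ i ∈ S, w i * Real.log (w i / q i)) / b) * b :=
        mul_le_mul_of_nonneg_right hjensen hb.le
    _ = ∑ i ∈ S, w i * Real.log (w i / q i) := by field_simp


open Real in
lemma aux_pinsker_margin (n : ℕ) (w q mm : Fin n → ℝ)
    (hmargin : ∀ i, mm i = -1 ∨ mm i = 1)
    (hw0 : ∀ i, 0 ≤ w i) (hw1 : ∑ i, w i = 1)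
    (hq0 : ∀ i, 0 < q i) (hq1 : ∑ i, q i = 1) :
    (∑ i, w i * mm i) - ∑ i, q i * mm i ≤ Real.sqrt (2 * klDiv n w q) := by
  classical
  set A : Finset (Fin n) := Finset.univ.filter (fun i => mm i = 1) with hA
  set B : Finset (Fin n) := Finset.univ.filter (fun i => ¬ mm i = 1) with hB
  have hsplit : ∀ v : Fin n → ℝ, (∑ i ∈ A, v i) + (∑ i ∈ B, v i) = ∑ i, v i := by
    intro v
    exact Finset.sum_filter_add_sum_filter_not _ _ _
  have hmarg : ∀ v : Fin n → ℝ, (∑ i, v i) = 1 →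
      ∑ i, v i * mm i = 2 * (∑ i ∈ A, v i) - 1 := by
    intro v hv
    rw [← hsplit (fun i => v i * mm i)]
    have e1 : ∑ i ∈ A, v i * mm i = ∑ i ∈ A, v i := by
      apply Finset.sum_congr rfl
      intro i hi
      have : mm i = 1 := (Finset.mem_filter.mp hi).2
      rw [this, mul_one]
    have e2 : ∑ i ∈ B, v i * mm i = -∑ i ∈ B, v i := by
      rw [← Finset.sum_neg_distrib]
      apply Finset.sum_congr rfl
      intro i hi
      have h1 : ¬ mm i = 1 := (Finset.mem_filter.mp hi).2
      have : mm i = -1 := (hmargin i).resolve_right h1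
      rw [this]; ring
    rw [e1, e2]
    have := hsplit v
    rw [hv] at this
    linarith
  set a := ∑ i ∈ A, w i with ha
  set b := ∑ i ∈ A, q i with hb
  rw [hmarg w hw1, hmarg q hq1]
  have hgoal : 2 * a - 1 - (2 * b - 1) = 2 * (a - b) := by ring
  rw [hgoal]
  rcases le_or_gt a b with hab | hab
  · have : 2 * (a - b) ≤ 0 := by linarith
    exact this.trans (Real.sqrt_nonneg _)
  · -- a > b
    have hAne : A.Nonempty := by
      by_contra h
      rw [Finset.not_nonempty_iff_eq_empty] at h
      have hb0 : b = 0 := by rw [hb, h]; simp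
      have ha0 : a = 0 := by rw [ha, h]; simp
      rw [hb0, ha0] at hab; exact lt_irrefl 0 hab
    have hBne : B.Nonempty := by
      by_contra h
      rw [Finset.not_nonempty_iff_eq_empty] at h
      have h1 := hsplit q
      have h2 := hsplit w
      rw [hq1, h] at h1
      rw [hw1, h] at h2
      simp only [Finset.sum_empty, add_zero] at h1 h2
      rw [← ha] at h2
      rw [← hb] at h1
      rw [h1, h2] at hab
      exact lt_irrefl 1 hab
    have hbpos : 0 < b := Finset.sum_pos (fun i _ => hq0 i) hAne
    have hBq : 0 < ∑ i ∈ B, q i := Finset.sum_pos (fun i _ => hq0 i) hBne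
    have hbB : ∑ i ∈ B, q i = 1 - b := by have := hsplit q; rw [hq1] at this; linarith
    have haB : ∑ i ∈ B, w i = 1 - a := by have := hsplit w; rw [hw1] at this; linarith
    have hb1 : b < 1 := by rw [hbB] at hBq; linarith
    have ha0 : 0 ≤ a := Finset.sum_nonneg (fun i _ => hw0 i)
    have ha1 : a ≤ 1 := by
      have hpos : 0 ≤ ∑ i ∈ B, w i := Finset.sum_nonneg (fun i _ => hw0 i)
      rw [haB] at hpos; linarith
    -- log-sum on A and B
    have hLA := aux_logSum A w q (fun i _ => hw0 i) (fun i _ => hq0 i) hbpos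
    have hLB := aux_logSum B w q (fun i _ => hw0 i) (fun i _ => hq0 i) hBq
    rw [haB, hbB] at hLB
    have hKL : 2 * (a - b) ^ 2 ≤ klDiv n w q := by
      have hbp := aux_binPinsker a b ha0 ha1 hbpos hb1
      have : klDiv n w q = (∑ i ∈ A, w i * Real.log (w i / q i))
          + ∑ i ∈ B, w i * Real.log (w i / q i) := by
        rw [klDiv, ← hsplit (fun i => w i * Real.log (w i / q i))]
      rw [this]
      calc 2 * (a - b) ^ 2 ≤ a * Real.log (a / b) + (1 - a) * Real.log ((1 - a) / (1 - b)) := hbp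
        _ ≤ _ := add_le_add hLA hLB
    have hsq : (2 * (a - b)) ^ 2 ≤ 2 * klDiv n w q := by nlinarith [hKL]
    calc 2 * (a - b) = Real.sqrt ((2 * (a - b)) ^ 2) := by
          rw [Real.sqrt_sq (by linarith)]
      _ ≤ Real.sqrt (2 * klDiv n w q) := Real.sqrt_le_sqrt hsq

/-- **Main theorem: exponential loss bound with fairness cost.**
Boosting for `T` rounds with `±1` margins, weighted errors `ε_t ∈ (0,1)`, and
`α_t = (1/2)·ln((1−ε_t)/ε_t)`.  If at each round there is a distribution
`w^t ∈ Δ_n` whose edge `γ_t^(w)` exceeds the fairness cost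
`δ_t = √(KL(w^t‖q^t)/2)`, then
`L_exp(f_T) ≤ n · exp(−2 · Σ_t (γ_t^(w) − δ_t)^2)`. -/
theorem fairproj_exp_loss_bound (n : ℕ) (hn : 1 ≤ n) (T : ℕ)
    (m : ℕ → Fin n → ℝ) (α : ℕ → ℝ) (ε : ℕ → ℝ) (w : ℕ → Fin n → ℝ)
    (γw δ : ℕ → ℝ)
    (hmargin : ∀ t ∈ Finset.Icc 1 T, ∀ i, m t i = -1 ∨ m t i = 1)
    (hε : ∀ t ∈ Finset.Icc 1 T,
      ε t = ∑ i, if m t i = -1 then expWeights n m α t i else 0)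
    (hε_pos : ∀ t ∈ Finset.Icc 1 T, 0 < ε t)
    (hε_lt : ∀ t ∈ Finset.Icc 1 T, ε t < 1)
    (hα : ∀ t ∈ Finset.Icc 1 T, α t = (1 / 2) * Real.log ((1 - ε t) / ε t))
    (hw_nonneg : ∀ t ∈ Finset.Icc 1 T, ∀ i, 0 ≤ w t i)
    (hw_sum : ∀ t ∈ Finset.Icc 1 T, ∑ i, w t i = 1)
    (hγw : ∀ t ∈ Finset.Icc 1 T, γw t = (1 / 2) * ∑ i, w t i * m t i)
    (hδ : ∀ t ∈ Finset.Icc 1 T,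
      δ t = Real.sqrt (klDiv n (w t) (expWeights n m α t) / 2))
    (hedge : ∀ t ∈ Finset.Icc 1 T, δ t < γw t) :
    expLoss n m α T ≤ n * Real.exp (-2 * ∑ t ∈ Finset.Icc 1 T, (γw t - δ t) ^ 2) := by
  classical
  have hnpos : 0 < n := hn
  have hfin : Nonempty (Fin n) := Fin.pos_iff_nonempty.mp hnpos
  have hL_pos : ∀ t, 0 < expLoss n m α t := fun t =>
    Finset.sum_pos (fun i _ => Real.exp_pos _) Finset.univ_nonempty
  have hq_pos : ∀ t i, 0 < expWeights n m α t i :=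
    fun t i => div_pos (Real.exp_pos _) (hL_pos _)
  have hq_sum : ∀ t, ∑ i, expWeights n m α t i = 1 := by
    intro t
    unfold expWeights
    rw [← Finset.sum_div]
    exact div_self (hL_pos _).ne'
  -- per-round step
  have hstep : ∀ k : ℕ, k + 1 ≤ T →
      expLoss n m α (k + 1) ≤
        expLoss n m α k * Real.exp (-2 * (γw (k + 1) - δ (k + 1)) ^ 2) := by
    intro k hk1
    set t := k + 1 with ht_def
    have ht : t ∈ Finset.Icc 1 T := Finset.mem_Icc.mpr ⟨Nat.succ_le_succ (Nat.zero_le k), hk1⟩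
    set E := ε t with hEdef
    have hE0 : 0 < E := hε_pos t ht
    have hE1 : E < 1 := hε_lt t ht
    set L := expLoss n m α k with hLdef
    have htk : t - 1 = k := rfl
    -- the exponential weights at round t
    set q : Fin n → ℝ := expWeights n m α t with hqdef
    have hqL : ∀ i, q i = Real.exp (-(cumScore n m α k i)) / L := fun i => rfl
    -- sum over error set
    have hLne : L ≠ 0 := (hL_pos k).ne'
    have hεsum : ∑ i ∈ Finset.univ.filter (fun i => m t i = -1),
        Real.exp (-(cumScore n m α k i)) = E * L := by
      have h1 := hε t ht
      rw [← Finset.sum_filter] at h1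
      calc ∑ i ∈ Finset.univ.filter (fun i => m t i = -1), Real.exp (-(cumScore n m α k i))
          = ∑ i ∈ Finset.univ.filter (fun i => m t i = -1), q i * L := by
            apply Finset.sum_congr rfl
            intro i _
            rw [hqL i, div_mul_cancel₀ _ hLne]
        _ = E * L := by rw [← Finset.sum_mul, ← h1, hEdef]
    have hεsum' : ∑ i ∈ Finset.univ.filter (fun i => ¬ m t i = -1),
        Real.exp (-(cumScore n m α k i)) = (1 - E) * L := by
      have hsp := Finset.sum_filter_add_sum_filter_not Finset.univ (fun i => m t i = -1)
        (fun i => Real.exp (-(cumScore n m α k i)))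
      have hLsum : ∑ i, Real.exp (-(cumScore n m α k i)) = L := rfl
      rw [hLsum, hεsum] at hsp
      linarith
    -- split the loss
    have hscore : ∀ i, cumScore n m α t i = cumScore n m α k i + α t * m t i := by
      intro i
      unfold cumScore
      rw [ht_def, Finset.sum_Icc_succ_top (Nat.succ_le_succ (Nat.zero_le k))]
    have hloss_split : expLoss n m α t
        = E * L * Real.exp (α t) + (1 - E) * L * Real.exp (-(α t)) := by
      unfold expLoss
      calc ∑ i, Real.exp (-(cumScore n m α t i))
          = ∑ i, (if m t i = -1 then Real.exp (-(cumScore n m α k i)) * Real.exp (α t)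
              else Real.exp (-(cumScore n m α k i)) * Real.exp (-(α t))) := by
            apply Finset.sum_congr rfl
            intro i _
            rw [hscore i]
            rcases hmargin t ht i with hm | hm
            · rw [hm, if_pos rfl, ← Real.exp_add]
              congr 1
              ring
            · rw [hm, if_neg (by norm_num), ← Real.exp_add]
              congr 1
              ring
        _ = (∑ i ∈ Finset.univ.filter (fun i => m t i = -1),
              Real.exp (-(cumScore n m α k i)) * Real.exp (α t))
            + ∑ i ∈ Finset.univ.filter (fun i => ¬ m t i = -1),
              Real.exp (-(cumScore n m α k i)) * Real.exp (-(α t)) := by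
            rw [← Finset.sum_filter_add_sum_filter_not Finset.univ (fun i => m t i = -1)]
            congr 1
            · apply Finset.sum_congr rfl
              intro i hi
              rw [if_pos (Finset.mem_filter.mp hi).2]
            · apply Finset.sum_congr rfl
              intro i hi
              rw [if_neg (Finset.mem_filter.mp hi).2]
        _ = E * L * Real.exp (α t) + (1 - E) * L * Real.exp (-(α t)) := by
            rw [← Finset.sum_mul, ← Finset.sum_mul, hεsum, hεsum']
    -- exp(α) in sqrt form
    have hr0 : 0 < (1 - E) / E := div_pos (by linarith) hE0
    have hexpα : Real.exp (α t) = Real.sqrt ((1 - E) / E) := by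
      rw [hα t ht, Real.sqrt_eq_rpow, Real.rpow_def_of_pos hr0, ← hEdef]
      ring_nf
    have hexpα' : Real.exp (-(α t)) = Real.sqrt (E / (1 - E)) := by
      rw [Real.exp_neg, hexpα, ← Real.sqrt_inv, inv_div]
    have hEne : E ≠ 0 := hE0.ne'
    have hZ1 : E * Real.sqrt ((1 - E) / E) = Real.sqrt (E * (1 - E)) := by
      have h1 : E * Real.sqrt ((1 - E) / E) = Real.sqrt (E ^ 2 * ((1 - E) / E)) := by
        rw [Real.sqrt_mul (sq_nonneg E), Real.sqrt_sq hE0.le]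
      rw [h1]
      congr 1
      field_simp
    have hZ2 : (1 - E) * Real.sqrt (E / (1 - E)) = Real.sqrt (E * (1 - E)) := by
      have h0 : (0:ℝ) ≤ 1 - E := by linarith
      have h1 : (1 - E) * Real.sqrt (E / (1 - E)) = Real.sqrt ((1 - E) ^ 2 * (E / (1 - E))) := by
        rw [Real.sqrt_mul (sq_nonneg (1 - E)), Real.sqrt_sq h0]
      rw [h1]
      congr 1
      have : (1:ℝ) - E ≠ 0 := by linarith
      field_simp
    have hloss : expLoss n m α t = L * (2 * Real.sqrt (E * (1 - E))) := by
      rw [hloss_split, hexpα, hexpα']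
      calc E * L * Real.sqrt ((1 - E) / E) + (1 - E) * L * Real.sqrt (E / (1 - E))
          = L * (E * Real.sqrt ((1 - E) / E)) + L * ((1 - E) * Real.sqrt (E / (1 - E))) := by ring
        _ = L * (2 * Real.sqrt (E * (1 - E))) := by rw [hZ1, hZ2]; ring
    -- edge of q
    have hqm : ∑ i, q i * m t i = 1 - 2 * E := by
      have h1 := hε t ht
      calc ∑ i, q i * m t i
          = ∑ i, (q i - 2 * (if m t i = -1 then q i else 0)) := by
            apply Finset.sum_congr rfl
            intro i _
            rcases hmargin t ht i with hm | hm
            · rw [hm, if_pos rfl]; ring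
            · rw [hm, if_neg (by norm_num)]; ring
        _ = 1 - 2 * E := by
            rw [Finset.sum_sub_distrib, hq_sum t, ← Finset.mul_sum, ← h1]
    have hpin := aux_pinsker_margin n (w t) q (m t) (hmargin t ht) (hw_nonneg t ht)
      (hw_sum t ht) (hq_pos t) (hq_sum t)
    have h2δ : Real.sqrt (2 * klDiv n (w t) q) = 2 * δ t := by
      rw [hδ t ht, hqdef]
      rw [show 2 * klDiv n (w t) (expWeights n m α t)
        = 4 * (klDiv n (w t) (expWeights n m α t) / 2) by ring]
      rw [Real.sqrt_mul (by norm_num : (0:ℝ) ≤ 4)]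
      congr 1
      rw [show (4:ℝ) = 2 ^ 2 by norm_num, Real.sqrt_sq (by norm_num : (0:ℝ) ≤ 2)]
    have hγq : γw t - δ t ≤ 1 / 2 - E := by
      have h3 := hγw t ht
      rw [hqm, h2δ] at hpin
      linarith
    have hc0 : 0 < γw t - δ t := by linarith [hedge t ht]
    set c := γw t - δ t with hcdef
    have h4 : 4 * (E * (1 - E)) ≤ 1 - 4 * c ^ 2 := by nlinarith [hγq, hc0]
    have h5 : 1 - 4 * c ^ 2 ≤ Real.exp (-(4 * c ^ 2)) := by
      linarith [Real.add_one_le_exp (-(4 * c ^ 2))]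
    have hZb : 2 * Real.sqrt (E * (1 - E)) ≤ Real.exp (-2 * c ^ 2) := by
      have e1 : 2 * Real.sqrt (E * (1 - E)) = Real.sqrt (4 * (E * (1 - E))) := by
        rw [show (4:ℝ) * (E * (1 - E)) = 2 ^ 2 * (E * (1 - E)) by ring,
          Real.sqrt_mul (sq_nonneg 2), Real.sqrt_sq (by norm_num : (0:ℝ) ≤ 2)]
      have e2 : Real.sqrt (Real.exp (-(4 * c ^ 2))) = Real.exp (-2 * c ^ 2) := by
        rw [show Real.exp (-(4 * c ^ 2)) = (Real.exp (-2 * c ^ 2)) ^ 2 by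
          rw [← Real.exp_nat_mul]; congr 1; push_cast; ring]
        rw [Real.sqrt_sq (Real.exp_pos _).le]
      rw [e1, ← e2]
      exact Real.sqrt_le_sqrt (le_trans h4 h5)
    calc expLoss n m α (k + 1) = L * (2 * Real.sqrt (E * (1 - E))) := hloss
      _ ≤ L * Real.exp (-2 * c ^ 2) := mul_le_mul_of_nonneg_left hZb (hL_pos k).le
      _ = expLoss n m α k * Real.exp (-2 * (γw (k + 1) - δ (k + 1)) ^ 2) := by
          rw [hLdef, hcdef]
  -- induction
  suffices h : ∀ k : ℕ, k ≤ T → expLoss n m α k ≤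
      n * Real.exp (-2 * ∑ t ∈ Finset.Icc 1 k, (γw t - δ t) ^ 2) from h T le_rfl
  intro k
  induction k with
  | zero =>
      intro _
      have h0 : expLoss n m α 0 = n := by
        unfold expLoss cumScore
        simp
      rw [h0]
      simp
  | succ k ih =>
      intro hk1
      have hk := Nat.le_of_succ_le hk1
      have h1 := hstep k hk1
      have h2 := ih hk
      calc expLoss n m α (k + 1)
          ≤ expLoss n m α k * Real.exp (-2 * (γw (k + 1) - δ (k + 1)) ^ 2) := h1
        _ ≤ (n * Real.exp (-2 * ∑ t ∈ Finset.Icc 1 k, (γw t - δ t) ^ 2))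
              * Real.exp (-2 * (γw (k + 1) - δ (k + 1)) ^ 2) :=
            mul_le_mul_of_nonneg_right h2 (Real.exp_pos _).le
        _ = n * Real.exp (-2 * ∑ t ∈ Finset.Icc 1 (k + 1), (γw t - δ t) ^ 2) := by
            rw [Finset.sum_Icc_succ_top (Nat.succ_le_succ (Nat.zero_le k)), mul_assoc,
              ← Real.exp_add]
            congr 2
            ring
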